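/- The usual braid relations hold for the operators τ_i on linear extensions (i.e., (π · τ_i · τ_{i+1})·τ_i = (π · τ_{i+1} · τ_i)·τ_{i+1} for all linear extensions π and all i) if and only if the poset P is a direct sum of chains. -/

import Mathlib

open scoped Classical
noncomputable section

/-- `π` is a linear extension of the strict order `lt` on `Fin n`. -/
def IsLinExt {n : ℕ} (lt : Fin n → Fin n → Prop) (π : Equiv.Perm (Fin n)) : Prop :=
  ∀ i j : Fin n, lt (π i) (π j) → i < j

/-- The operator `τ_i` (0-based): swap positions `i`, `i+1` if entries are incomparable. -/
def tauOp {n : ℕ} (lt : Fin n → Fin n → Prop) (i : ℕ) (π : Equiv.Perm (Fin n)) :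
    Equiv.Perm (Fin n) :=
  if h : i + 1 < n then
    if ¬ lt (π ⟨i, Nat.lt_of_succ_lt h⟩) (π ⟨i + 1, h⟩) ∧
       ¬ lt (π ⟨i + 1, h⟩) (π ⟨i, Nat.lt_of_succ_lt h⟩)
    then π * Equiv.swap ⟨i, Nat.lt_of_succ_lt h⟩ ⟨i + 1, h⟩
    else π
  else π

/-- The operator `T_{i,j}` (0-based): `τ_i τ_{i+1} ⋯ τ_{j-1}` for `i ≤ j`,
and `τ_{i-1} ⋯ τ_j` for `i > j`, applied left to right. -/
def Tmove {n : ℕ} (lt : Fin n → Fin n → Prop) (i j : ℕ) (π : Equiv.Perm (Fin n)) :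
    Equiv.Perm (Fin n) :=
  if i ≤ j then (List.range (j - i)).foldl (fun p k => tauOp lt (i + k) p) π
  else (List.range (i - j)).foldl (fun p k => tauOp lt (i - 1 - k) p) π

/-- The transition matrix of the `P`-random-to-random shuffle. -/
def Mrr {n : ℕ} (lt : Fin n → Fin n → Prop) (π π' : Equiv.Perm (Fin n)) : ℝ :=
  (Finset.univ.filter (fun p : Fin n × Fin n => π' = Tmove lt (p.1 : ℕ) (p.2 : ℕ) π)).card /
    (n ^ 2 : ℝ)

/-- Two elements are in the same connected component of the comparability graph. -/
def InSameComp {n : ℕ} (lt : Fin n → Fin n → Prop) (x y : Fin n) : Prop :=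
  Relation.ReflTransGen (fun a b => lt a b ∨ lt b a) x y

namespace BB

lemma tau_eval {n : ℕ} (lt : Fin n → Fin n → Prop) (j : ℕ) (h : j + 1 < n)
    (σ : Equiv.Perm (Fin n)) :
    tauOp lt j σ =
      if (¬ lt (σ ⟨j, Nat.lt_of_succ_lt h⟩) (σ ⟨j+1, h⟩) ∧
          ¬ lt (σ ⟨j+1, h⟩) (σ ⟨j, Nat.lt_of_succ_lt h⟩))
      then σ * Equiv.swap ⟨j, Nat.lt_of_succ_lt h⟩ ⟨j+1, h⟩ else σ := by
  rw [tauOp, dif_pos h]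

variable {n i : ℕ}

@[reducible] def incp (lt : Fin n → Fin n → Prop) (a b : Fin n) : Prop := ¬ lt a b ∧ ¬ lt b a

@[reducible] def x0 (_h : i + 2 < n) : Fin n := ⟨i, by omega⟩
@[reducible] def x1 (_h : i + 2 < n) : Fin n := ⟨i+1, by omega⟩
@[reducible] def x2 (_h : i + 2 < n) : Fin n := ⟨i+2, by omega⟩

variable (lt : Fin n → Fin n → Prop) (h : i + 2 < n)

lemma tau0_pos (σ : Equiv.Perm (Fin n)) (hc : incp lt (σ (x0 h)) (σ (x1 h))) :
    tauOp lt i σ = σ * Equiv.swap (x0 h) (x1 h) := by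
  rw [tau_eval lt i (by omega)]; exact if_pos hc

lemma tau0_neg (σ : Equiv.Perm (Fin n)) (hc : ¬ incp lt (σ (x0 h)) (σ (x1 h))) :
    tauOp lt i σ = σ := by
  rw [tau_eval lt i (by omega)]; exact if_neg hc

lemma tau1_pos (σ : Equiv.Perm (Fin n)) (hc : incp lt (σ (x1 h)) (σ (x2 h))) :
    tauOp lt (i+1) σ = σ * Equiv.swap (x1 h) (x2 h) := by
  rw [tau_eval lt (i+1) (by omega)]; exact if_pos hc

lemma tau1_neg (σ : Equiv.Perm (Fin n)) (hc : ¬ incp lt (σ (x1 h)) (σ (x2 h))) :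
    tauOp lt (i+1) σ = σ := by
  rw [tau_eval lt (i+1) (by omega)]; exact if_neg hc

end BB

namespace BB2
open BB
variable {n i : ℕ} (lt : Fin n → Fin n → Prop) (h : i + 2 < n)

lemma ne01 : (x0 h) ≠ (x1 h) := by simp [x0, x1, Fin.ext_iff]
lemma ne02 : (x0 h) ≠ (x2 h) := by simp [x0, x2, Fin.ext_iff]
lemma ne12 : (x1 h) ≠ (x2 h) := by simp [x1, x2, Fin.ext_iff]

lemma ap0a (σ : Equiv.Perm (Fin n)) : (σ * Equiv.swap (x0 h) (x1 h)) (x0 h) = σ (x1 h) := by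
  rw [Equiv.Perm.mul_apply, Equiv.swap_apply_left]
lemma ap0b (σ : Equiv.Perm (Fin n)) : (σ * Equiv.swap (x0 h) (x1 h)) (x1 h) = σ (x0 h) := by
  rw [Equiv.Perm.mul_apply, Equiv.swap_apply_right]
lemma ap0c (σ : Equiv.Perm (Fin n)) : (σ * Equiv.swap (x0 h) (x1 h)) (x2 h) = σ (x2 h) := by
  rw [Equiv.Perm.mul_apply, Equiv.swap_apply_of_ne_of_ne (ne02 h).symm (ne12 h).symm]
lemma ap1a (σ : Equiv.Perm (Fin n)) : (σ * Equiv.swap (x1 h) (x2 h)) (x0 h) = σ (x0 h) := by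
  rw [Equiv.Perm.mul_apply, Equiv.swap_apply_of_ne_of_ne (ne01 h) (ne02 h)]
lemma ap1b (σ : Equiv.Perm (Fin n)) : (σ * Equiv.swap (x1 h) (x2 h)) (x1 h) = σ (x2 h) := by
  rw [Equiv.Perm.mul_apply, Equiv.swap_apply_left]
lemma ap1c (σ : Equiv.Perm (Fin n)) : (σ * Equiv.swap (x1 h) (x2 h)) (x2 h) = σ (x1 h) := by
  rw [Equiv.Perm.mul_apply, Equiv.swap_apply_right]

lemma swap_braid :
    Equiv.swap (x0 h) (x1 h) * (Equiv.swap (x1 h) (x2 h) * Equiv.swap (x0 h) (x1 h)) =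
    Equiv.swap (x1 h) (x2 h) * (Equiv.swap (x0 h) (x1 h) * Equiv.swap (x1 h) (x2 h)) := by
  have h1 := Equiv.swap_mul_swap_mul_swap (x := x2 h) (y := x1 h) (z := x0 h)
    (ne12 h).symm (ne02 h).symm
  have h2 := Equiv.swap_mul_swap_mul_swap (x := x0 h) (y := x1 h) (z := x2 h)
    (ne01 h) (ne02 h)
  rw [Equiv.swap_comm (x1 h) (x0 h), Equiv.swap_comm (x2 h) (x1 h)] at h1
  rw [← mul_assoc, h1, ← mul_assoc, h2, Equiv.swap_comm]
end BB2

namespace BB3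
open BB BB2
variable {n i : ℕ} (lt : Fin n → Fin n → Prop) (h : i + 2 < n) (π : Equiv.Perm (Fin n))

lemma braid_holds
    (hnot1 : ¬ (¬ incp lt (π (x0 h)) (π (x1 h)) ∧ incp lt (π (x1 h)) (π (x2 h)) ∧
        ¬ incp lt (π (x0 h)) (π (x2 h))))
    (hnot2 : ¬ (incp lt (π (x0 h)) (π (x1 h)) ∧ ¬ incp lt (π (x1 h)) (π (x2 h)) ∧
        ¬ incp lt (π (x0 h)) (π (x2 h)))) :
    tauOp lt i (tauOp lt (i+1) (tauOp lt i π)) =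
      tauOp lt (i+1) (tauOp lt i (tauOp lt (i+1) π)) := by
  by_cases hA : incp lt (π (x0 h)) (π (x1 h)) <;>
  by_cases hB : incp lt (π (x1 h)) (π (x2 h)) <;>
  by_cases hC : incp lt (π (x0 h)) (π (x2 h))
  · -- TTT
    rw [tau0_pos lt h π hA,
      tau1_pos lt h _ (by rw [ap0b h π, ap0c h π]; exact hC),
      tau0_pos lt h _ (by rw [ap1a h _, ap1b h _, ap0a h π, ap0c h π]; exact hB),
      tau1_pos lt h π hB,
      tau0_pos lt h _ (by rw [ap1a h π, ap1b h π]; exact hC),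
      tau1_pos lt h _ (by rw [ap0b h _, ap0c h _, ap1a h π, ap1c h π]; exact hA)]
    simp only [mul_assoc]
    rw [swap_braid h]
  · -- TTF
    rw [tau0_pos lt h π hA,
      tau1_neg lt h _ (by rw [ap0b h π, ap0c h π]; exact hC),
      tau0_pos lt h _ (by rw [ap0a h π, ap0b h π]; exact ⟨hA.2, hA.1⟩),
      tau1_pos lt h π hB,
      tau0_neg lt h _ (by rw [ap1a h π, ap1b h π]; exact hC),
      tau1_pos lt h _ (by rw [ap1b h π, ap1c h π]; exact ⟨hB.2, hB.1⟩)]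
    rw [mul_assoc, mul_assoc, Equiv.swap_mul_self, Equiv.swap_mul_self]
  · -- TFT
    rw [tau0_pos lt h π hA,
      tau1_pos lt h _ (by rw [ap0b h π, ap0c h π]; exact hC),
      tau0_neg lt h _ (by rw [ap1a h _, ap1b h _, ap0a h π, ap0c h π]; exact hB),
      tau1_neg lt h π hB,
      tau0_pos lt h π hA,
      tau1_pos lt h _ (by rw [ap0b h π, ap0c h π]; exact hC)]
  · -- TFF : excluded
    exact absurd ⟨hA, hB, hC⟩ hnot2
  · -- FTT
    rw [tau0_neg lt h π hA,
      tau1_pos lt h π hB,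
      tau0_pos lt h _ (by rw [ap1a h π, ap1b h π]; exact hC),
      tau1_neg lt h _ (by rw [ap0b h _, ap0c h _, ap1a h π, ap1c h π]; exact hA)]
  · -- FTF : excluded
    exact absurd ⟨hA, hB, hC⟩ hnot1
  · -- FFT
    rw [tau0_neg lt h π hA, tau1_neg lt h π hB, tau0_neg lt h π hA, tau1_neg lt h π hB]
  · -- FFF
    rw [tau0_neg lt h π hA, tau1_neg lt h π hB, tau0_neg lt h π hA, tau1_neg lt h π hB]

lemma braid_fails_FTF
    (hA : ¬ incp lt (π (x0 h)) (π (x1 h))) (hB : incp lt (π (x1 h)) (π (x2 h)))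
    (hC : ¬ incp lt (π (x0 h)) (π (x2 h))) :
    tauOp lt i (tauOp lt (i+1) (tauOp lt i π)) ≠
      tauOp lt (i+1) (tauOp lt i (tauOp lt (i+1) π)) := by
  rw [tau0_neg lt h π hA,
    tau1_pos lt h π hB,
    tau0_neg lt h _ (by rw [ap1a h π, ap1b h π]; exact hC),
    tau1_pos lt h _ (by rw [ap1b h π, ap1c h π]; exact ⟨hB.2, hB.1⟩)]
  rw [mul_assoc, Equiv.swap_mul_self, mul_one]
  intro e
  exact ne12 h (Equiv.mul_swap_eq_iff.mp e)

lemma braid_fails_TFF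
    (hA : incp lt (π (x0 h)) (π (x1 h))) (hB : ¬ incp lt (π (x1 h)) (π (x2 h)))
    (hC : ¬ incp lt (π (x0 h)) (π (x2 h))) :
    tauOp lt i (tauOp lt (i+1) (tauOp lt i π)) ≠
      tauOp lt (i+1) (tauOp lt i (tauOp lt (i+1) π)) := by
  rw [tau0_pos lt h π hA,
    tau1_neg lt h _ (by rw [ap0b h π, ap0c h π]; exact hC),
    tau0_pos lt h _ (by rw [ap0a h π, ap0b h π]; exact ⟨hA.2, hA.1⟩),
    tau1_neg lt h π hB,
    tau0_pos lt h π hA,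
    tau1_neg lt h _ (by rw [ap0b h π, ap0c h π]; exact hC)]
  rw [mul_assoc, Equiv.swap_mul_self, mul_one]
  intro e
  exact ne01 h (Equiv.mul_swap_eq_iff.mp e.symm)

end BB3

namespace CONS

lemma exists_linExt_triple {n : ℕ} (lt : Fin n → Fin n → Prop)
    (htr : ∀ {a b c : Fin n}, lt a b → lt b c → lt a c) (hirr : ∀ a, ¬ lt a a)
    (p q r : Fin n) (hqp : lt q p) (hqr : lt q r)
    (hpr1 : ¬ lt p r) (hpr2 : ¬ lt r p) (hpr : p ≠ r)
    (hmax : ∀ z, lt q z → ¬ lt z p ∧ ¬ lt z r) :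
    ∃ (π : Equiv.Perm (Fin n)) (i : ℕ) (h : i + 2 < n),
      IsLinExt lt π ∧ π ⟨i, by omega⟩ = q ∧ π ⟨i+1, by omega⟩ = p ∧ π ⟨i+2, by omega⟩ = r := by
  classical
  have hqnep : q ≠ p := fun e => hirr q (e ▸ hqp)
  have hqner : q ≠ r := fun e => hirr q (e ▸ hqr)
  set β : Fin n → ℕ := fun z =>
    if z = q then 1 else if z = p then 2 else if z = r then 3 else
      if (lt z p ∨ lt z r) then 0 else 4 with hβ
  have hβq : β q = 1 := by simp [hβ]
  have hβp : β p = 2 := by simp [hβ, hqnep.symm]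
  have hβr : β r = 3 := by simp [hβ, hqner.symm, hpr.symm]
  have hβ0 : ∀ z, z ≠ q → z ≠ p → z ≠ r → (lt z p ∨ lt z r) → β z = 0 := by
    intro z h1 h2 h3 h4; simp [hβ, h1, h2, h3, h4]
  have hβ4 : ∀ z, z ≠ q → z ≠ p → z ≠ r → ¬ (lt z p ∨ lt z r) → β z = 4 := by
    intro z h1 h2 h3 h4; simp [hβ, h1, h2, h3, h4]
  have hβcases : ∀ z, β z = 0 ∨ β z = 1 ∨ β z = 2 ∨ β z = 3 ∨ β z = 4 := by
    intro z; by_cases h1 : z = q; · simp [hβ, h1]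
    by_cases h2 : z = p; · simp [hβ, h1, h2, hqnep.symm]
    by_cases h3 : z = r; · simp [hβ, h1, h2, h3, hqner.symm, hpr.symm]
    by_cases h4 : (lt z p ∨ lt z r) <;> simp [hβ, h1, h2, h3, h4]
  have hβval : ∀ z, β z = 1 → z = q := by
    intro z hz; by_contra h1
    by_cases h2 : z = p; · rw [h2, hβp] at hz; omega
    by_cases h3 : z = r; · rw [h3, hβr] at hz; omega
    by_cases h4 : (lt z p ∨ lt z r)
    · rw [hβ0 z h1 h2 h3 h4] at hz; omega
    · rw [hβ4 z h1 h2 h3 h4] at hz; omega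
  have hβval2 : ∀ z, β z = 2 → z = p := by
    intro z hz; by_contra h2
    by_cases h1 : z = q; · rw [h1, hβq] at hz; omega
    by_cases h3 : z = r; · rw [h3, hβr] at hz; omega
    by_cases h4 : (lt z p ∨ lt z r)
    · rw [hβ0 z h1 h2 h3 h4] at hz; omega
    · rw [hβ4 z h1 h2 h3 h4] at hz; omega
  have hβval3 : ∀ z, β z = 3 → z = r := by
    intro z hz; by_contra h3
    by_cases h1 : z = q; · rw [h1, hβq] at hz; omega
    by_cases h2 : z = p; · rw [h2, hβp] at hz; omega
    by_cases h4 : (lt z p ∨ lt z r)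
    · rw [hβ0 z h1 h2 h3 h4] at hz; omega
    · rw [hβ4 z h1 h2 h3 h4] at hz; omega
  -- monotonicity of β along lt
  have beta_le : ∀ {a b : Fin n}, lt a b → β a ≤ β b := by
    intro a b hab
    have hane : a ≠ b := fun e => hirr b (e ▸ hab)
    by_cases hbq : b = q
    · subst hbq
      -- a < q : then a < p, a not q,p,r
      have hap : lt a p := htr hab hqp
      have h2 : a ≠ p := fun e => hirr p (htr (e ▸ hab) hqp)
      have h3 : a ≠ r := fun e => hirr r (htr (e ▸ hab) hqr)
      rw [hβ0 a hane h2 h3 (Or.inl hap), hβq]; omega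
    by_cases hbp : b = p
    · subst hbp
      by_cases h1 : a = q
      · rw [h1, hβq, hβp]; omega
      have h3 : a ≠ r := fun e => hpr2 (e ▸ hab)
      rw [hβ0 a h1 hane h3 (Or.inl hab), hβp]; omega
    by_cases hbr : b = r
    · subst hbr
      by_cases h1 : a = q
      · rw [h1, hβq, hβr]; omega
      have h2 : a ≠ p := fun e => hpr1 (e ▸ hab)
      rw [hβ0 a h1 h2 hane (Or.inr hab), hβr]; omega
    by_cases hb4 : (lt b p ∨ lt b r)
    · -- β b = 0, show β a = 0
      rw [hβ0 b hbq hbp hbr hb4]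
      have ha4 : lt a p ∨ lt a r := hb4.imp (htr hab) (htr hab)
      have h1 : a ≠ q := by
        intro e
        have := hmax b (e ▸ hab)
        exact (hb4.imp this.1 this.2).elim id id
      have h2 : a ≠ p := by
        intro e
        rcases hb4 with hb | hb
        · exact hirr p (htr (e ▸ hab) hb)
        · exact hpr1 (htr (e ▸ hab) hb)
      have h3 : a ≠ r := by
        intro e
        rcases hb4 with hb | hb
        · exact hpr2 (htr (e ▸ hab) hb)
        · exact hirr r (htr (e ▸ hab) hb)
      rw [hβ0 a h1 h2 h3 ha4]
    · rw [hβ4 b hbq hbp hbr hb4]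
      have := hβcases a; omega
  -- the auxiliary partial order
  set leQ : Fin n → Fin n → Prop :=
    fun x y => β x < β y ∨ (β x = β y ∧ (x = y ∨ lt x y)) with hleQ
  have leQ_of_lt : ∀ {a b : Fin n}, lt a b → leQ a b := by
    intro a b hab
    rcases lt_or_eq_of_le (beta_le hab) with h | h
    · exact Or.inl h
    · exact Or.inr ⟨h, Or.inr hab⟩
  haveI : IsRefl (Fin n) leQ := ⟨fun a => Or.inr ⟨rfl, Or.inl rfl⟩⟩
  haveI : IsTrans (Fin n) leQ := by
    constructor
    · rintro a b c (h1 | ⟨h1, h1'⟩) (h2 | ⟨h2, h2'⟩)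
      · exact Or.inl (h1.trans h2)
      · exact Or.inl (h2 ▸ h1)
      · exact Or.inl (h1 ▸ h2)
      · refine Or.inr ⟨h1.trans h2, ?_⟩
        rcases h1' with rfl | h1'
        · exact h2'
        · rcases h2' with rfl | h2'
          · exact Or.inr h1'
          · exact Or.inr (htr h1' h2')
  haveI : IsAntisymm (Fin n) leQ := by
    constructor
    · rintro a b (h1 | ⟨h1, h1'⟩) (h2 | ⟨h2, h2'⟩)
      · omega
      · omega
      · omega
      · rcases h1' with e | h1'
        · exact e
        · rcases h2' with e | h2'
          · exact e.symm
          · exact absurd (htr h1' h2') (hirr a)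
  haveI : IsPreorder (Fin n) leQ := ⟨⟩
  haveI : IsPartialOrder (Fin n) leQ := ⟨⟩
  obtain ⟨s, hs, hsub⟩ := extend_partialOrder leQ
  haveI := hs
  haveI : IsTrans (Fin n) s := hs.toIsPartialOrder.toIsPreorder.toIsTrans
  haveI : IsAntisymm (Fin n) s := hs.toIsPartialOrder.toAntisymm
  haveI : IsTotal (Fin n) s := hs.toTotal
  have hantis : ∀ {u v : Fin n}, s u v → s v u → u = v := fun h1 h2 => Std.Antisymm.antisymm _ _ h1 h2
  have hsmono : ∀ {u v : Fin n}, leQ u v → s u v := fun {u v} h => hsub u v h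
  set l : List (Fin n) := Finset.univ.sort s with hl
  have hlen : l.length = n := by
    rw [hl, Finset.length_sort, Finset.card_univ, Fintype.card_fin]
  have hnd : l.Nodup := Finset.sort_nodup (s := Finset.univ) (r := s)
  have hmem : ∀ x : Fin n, x ∈ l := fun x => (Finset.mem_sort s).2 (Finset.mem_univ x)
  set π : Equiv.Perm (Fin n) :=
    (finCongr hlen.symm).trans (List.Nodup.getEquivOfForallMemList l hnd hmem) with hπdef
  have hπ : ∀ k : Fin n, π k = l.get (Fin.cast hlen.symm k) := fun k => rfl
  have hsorted : ∀ {a b : Fin n}, a < b → s (π a) (π b) := by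
    intro a b hab
    rw [hπ, hπ]
    exact (Finset.pairwise_sort (s := Finset.univ) (r := s)).rel_get_of_lt (by simpa using hab)
  have key1 : ∀ {u v : Fin n}, u ≠ v → leQ u v → π.symm u < π.symm v := by
    intro u v huv hq
    rcases lt_trichotomy (π.symm u) (π.symm v) with h | h | h
    · exact h
    · exact absurd (π.symm.injective h) huv
    · have h1 : s v u := by
        have := hsorted h
        rwa [Equiv.apply_symm_apply, Equiv.apply_symm_apply] at this
      exact absurd (hantis (hsmono hq) h1) huv
  have hlin : IsLinExt lt π := by
    intro a b hab
    have huv : π a ≠ π b := fun e => hirr (π a) (e ▸ hab)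
    have := key1 huv (leQ_of_lt hab)
    rwa [Equiv.symm_apply_apply, Equiv.symm_apply_apply] at this
  have succ1 : ∀ u v : Fin n, u ≠ v → leQ u v →
      (∀ w, w ≠ u → w ≠ v → leQ w u ∨ leQ v w) → (π.symm v : ℕ) = (π.symm u : ℕ) + 1 := by
    intro u v huv hq hbet
    have hab : π.symm u < π.symm v := key1 huv hq
    by_contra hne
    have hlt : (π.symm u : ℕ) + 1 < (π.symm v : ℕ) := by
      have := (Fin.lt_iff_val_lt_val.1 hab); omega
    set m : Fin n := ⟨(π.symm u : ℕ) + 1, by omega⟩ with hm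
    set w : Fin n := π m with hw
    have hwu : w ≠ u := by
      intro e
      have : m = π.symm u := by rw [← e, hw, Equiv.symm_apply_apply]
      have := congrArg Fin.val this
      simp [hm] at this
    have hwv : w ≠ v := by
      intro e
      have : m = π.symm v := by rw [← e, hw, Equiv.symm_apply_apply]
      have := congrArg Fin.val this
      simp [hm] at this; omega
    rcases hbet w hwu hwv with h | h
    · have := key1 hwu h
      rw [hw, Equiv.symm_apply_apply] at this
      have := Fin.lt_iff_val_lt_val.1 this
      simp [hm] at this
    · have := key1 hwv.symm h
      rw [hw, Equiv.symm_apply_apply] at this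
      have := Fin.lt_iff_val_lt_val.1 this
      simp [hm] at this; omega
  have hqp' : leQ q p := Or.inl (by rw [hβq, hβp]; omega)
  have hpr' : leQ p r := Or.inl (by rw [hβp, hβr]; omega)
  have h1 : (π.symm p : ℕ) = (π.symm q : ℕ) + 1 := by
    refine succ1 q p hqnep hqp' ?_
    intro w hw1 hw2
    rcases hβcases w with h | h | h | h | h
    · exact Or.inl (Or.inl (by rw [hβq, h]; omega))
    · exact absurd (hβval w h) hw1
    · exact absurd (hβval2 w h) hw2
    · exact Or.inr (Or.inl (by rw [hβp, h]; omega))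
    · exact Or.inr (Or.inl (by rw [hβp, h]; omega))
  have h2 : (π.symm r : ℕ) = (π.symm q : ℕ) + 2 := by
    have := succ1 p r hpr hpr' ?_
    · omega
    intro w hw1 hw2
    rcases hβcases w with h | h | h | h | h
    · exact Or.inl (Or.inl (by rw [hβp, h]; omega))
    · exact Or.inl (Or.inl (by rw [hβp, h]; omega))
    · exact absurd (hβval2 w h) hw1
    · exact absurd (hβval3 w h) hw2
    · exact Or.inr (Or.inl (by rw [hβr, h]; omega))
  refine ⟨π, (π.symm q : ℕ), by have := (π.symm r).isLt; omega, hlin, ?_, ?_, ?_⟩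
  · have : (⟨(π.symm q : ℕ), by have := (π.symm r).isLt; omega⟩ : Fin n) = π.symm q := by
      apply Fin.ext; rfl
    rw [this, Equiv.apply_symm_apply]
  · have : (⟨(π.symm q : ℕ) + 1, by have := (π.symm r).isLt; omega⟩ : Fin n) = π.symm p := by
      apply Fin.ext; simp [h1]
    rw [this, Equiv.apply_symm_apply]
  · have : (⟨(π.symm q : ℕ) + 2, by have := (π.symm r).isLt; omega⟩ : Fin n) = π.symm r := by
      apply Fin.ext; simp [h2]
    rw [this, Equiv.apply_symm_apply]

end CONS

namespace MINV

lemma refine_V {n : ℕ} (lt : Fin n → Fin n → Prop)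
    (htr : ∀ {a b c : Fin n}, lt a b → lt b c → lt a c) (hirr : ∀ a, ¬ lt a a)
    (hex : ∃ p q r : Fin n, lt q p ∧ lt q r ∧ ¬ lt p r ∧ ¬ lt r p ∧ p ≠ r) :
    ∃ p q r : Fin n, lt q p ∧ lt q r ∧ ¬ lt p r ∧ ¬ lt r p ∧ p ≠ r ∧
      ∀ z, lt q z → ¬ lt z p ∧ ¬ lt z r := by
  classical
  set bel : Fin n → ℕ := fun x => (Finset.univ.filter (fun w => lt w x)).card with hbel
  have hbel_lt : ∀ {a b : Fin n}, lt a b → bel a < bel b := by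
    intro a b hab
    apply Finset.card_lt_card
    constructor
    · intro w hw
      simp only [Finset.mem_filter, Finset.mem_univ, true_and] at hw ⊢
      exact htr hw hab
    · intro hconta
      have := hconta (by simp only [Finset.mem_filter, Finset.mem_univ, true_and]; exact hab)
      simp only [Finset.mem_filter, Finset.mem_univ, true_and] at this
      exact hirr a this
  have hbel_le : ∀ x, bel x ≤ n := by
    intro x
    calc bel x ≤ Finset.univ.card := Finset.card_filter_le _ _
    _ = n := by simp
  set S : Finset (Fin n × Fin n × Fin n) :=
    Finset.univ.filter (fun t => lt t.2.1 t.1 ∧ lt t.2.1 t.2.2 ∧ ¬ lt t.1 t.2.2 ∧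
      ¬ lt t.2.2 t.1 ∧ t.1 ≠ t.2.2) with hS
  have hSne : S.Nonempty := by
    obtain ⟨p, q, r, h1, h2, h3, h4, h5⟩ := hex
    refine ⟨(p, q, r), ?_⟩
    simp only [hS, Finset.mem_filter, Finset.mem_univ, true_and]
    exact ⟨h1, h2, h3, h4, h5⟩
  set f : Fin n × Fin n × Fin n → ℕ := fun t => bel t.1 + bel t.2.2 + (n - bel t.2.1) with hf
  obtain ⟨t, htS, hmin⟩ := Finset.exists_min_image S f hSne
  obtain ⟨p, q, r⟩ := t
  simp only [hS, Finset.mem_filter, Finset.mem_univ, true_and] at htS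
  obtain ⟨h1, h2, h3, h4, h5⟩ := htS
  refine ⟨p, q, r, h1, h2, h3, h4, h5, ?_⟩
  intro z hqz
  by_cases hzp : lt z p <;> by_cases hzr : lt z r
  · exfalso
    have hmem : (p, z, r) ∈ S := by
      simp only [hS, Finset.mem_filter, Finset.mem_univ, true_and]
      exact ⟨hzp, hzr, h3, h4, h5⟩
    have := hmin _ hmem
    simp only [hf] at this
    have hq1 := hbel_lt hqz
    have hq2 := hbel_le z
    omega
  · exfalso
    have hner : z ≠ r := fun e => h4 (e ▸ hzp)
    have hnrz : ¬ lt r z := fun hh => h4 (htr hh hzp)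
    have hmem : (z, q, r) ∈ S := by
      simp only [hS, Finset.mem_filter, Finset.mem_univ, true_and]
      exact ⟨hqz, h2, hzr, hnrz, hner⟩
    have := hmin _ hmem
    simp only [hf] at this
    have hq1 := hbel_lt hzp
    omega
  · exfalso
    have hnep : p ≠ z := fun e => h3 (e ▸ hzr)
    have hnpz : ¬ lt p z := fun hh => h3 (htr hh hzr)
    have hmem : (p, q, z) ∈ S := by
      simp only [hS, Finset.mem_filter, Finset.mem_univ, true_and]
      exact ⟨h1, hqz, hnpz, hzp, hnep⟩
    have := hmin _ hmem
    simp only [hf] at this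
    have hq1 := hbel_lt hzr
    omega
  · exact ⟨hzp, hzr⟩

end MINV

namespace FAIL

lemma braid_fail_V {n : ℕ} (lt : Fin n → Fin n → Prop)
    (htr : ∀ {a b c : Fin n}, lt a b → lt b c → lt a c) (hirr : ∀ a, ¬ lt a a)
    (H : ∀ π : Equiv.Perm (Fin n), IsLinExt lt π → ∀ i : ℕ, i + 2 < n →
        tauOp lt i (tauOp lt (i + 1) (tauOp lt i π)) =
          tauOp lt (i + 1) (tauOp lt i (tauOp lt (i + 1) π)))
    (hex : ∃ p q r : Fin n, lt q p ∧ lt q r ∧ ¬ lt p r ∧ ¬ lt r p ∧ p ≠ r) : False := by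
  obtain ⟨p, q, r, k1, k2, k3, k4, k5, kmax⟩ := MINV.refine_V lt htr hirr hex
  obtain ⟨π, i', hi', hlin, hq, hp, hr⟩ :=
    CONS.exists_linExt_triple lt htr hirr p q r k1 k2 k3 k4 k5 kmax
  refine BB3.braid_fails_FTF lt hi' π ?_ ?_ ?_ (H π hlin i' hi')
  · rw [show π (BB.x0 hi') = q from hq, show π (BB.x1 hi') = p from hp]
    exact fun hcon => hcon.1 k1
  · rw [show π (BB.x1 hi') = p from hp, show π (BB.x2 hi') = r from hr]
    exact ⟨k3, k4⟩
  · rw [show π (BB.x0 hi') = q from hq, show π (BB.x2 hi') = r from hr]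
    exact fun hcon => hcon.1 k2

lemma braid_fail_L {n : ℕ} (lt : Fin n → Fin n → Prop)
    (htr : ∀ {a b c : Fin n}, lt a b → lt b c → lt a c) (hirr : ∀ a, ¬ lt a a)
    (H : ∀ π : Equiv.Perm (Fin n), IsLinExt lt π → ∀ i : ℕ, i + 2 < n →
        tauOp lt i (tauOp lt (i + 1) (tauOp lt i π)) =
          tauOp lt (i + 1) (tauOp lt i (tauOp lt (i + 1) π)))
    (hex : ∃ p q r : Fin n, lt p q ∧ lt r q ∧ ¬ lt p r ∧ ¬ lt r p ∧ p ≠ r) : False := by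
  obtain ⟨a, c, b, h1, h2, hn1, hn2, hne⟩ := hex
  have htr' : ∀ {u v w : Fin n}, lt v u → lt w v → lt w u := fun ha hb => htr hb ha
  obtain ⟨p, q, r, k1, k2, k3, k4, k5, kmax⟩ :=
    MINV.refine_V (fun u v => lt v u) (fun ha hb => htr hb ha) hirr
      ⟨a, c, b, h1, h2, hn2, hn1, hne⟩
  obtain ⟨π', i', hi', hlin', hq, hp, hr⟩ :=
    CONS.exists_linExt_triple (fun u v => lt v u) (fun ha hb => htr hb ha) hirr
      p q r k1 k2 k3 k4 k5 kmax
  set π : Equiv.Perm (Fin n) := Fin.revPerm.trans π' with hπ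
  have happ : ∀ k : Fin n, π k = π' k.rev := fun k => rfl
  have hlin : IsLinExt lt π := by
    intro u v huv
    rw [happ, happ] at huv
    have := hlin' _ _ (show lt (π' u.rev) (π' v.rev) from huv)
    exact Fin.rev_lt_rev.mp this
  have hj2 : (n - 3 - i') + 2 < n := by omega
  have hrev0 : (⟨n - 3 - i', by omega⟩ : Fin n).rev = ⟨i' + 2, by omega⟩ := by
    apply Fin.ext; show n - (n - 3 - i' + 1) = i' + 2; omega
  have hrev1 : (⟨n - 3 - i' + 1, by omega⟩ : Fin n).rev = ⟨i' + 1, by omega⟩ := by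
    apply Fin.ext; show n - (n - 3 - i' + 1 + 1) = i' + 1; omega
  have hrev2 : (⟨n - 3 - i' + 2, by omega⟩ : Fin n).rev = ⟨i', by omega⟩ := by
    apply Fin.ext; show n - (n - 3 - i' + 2 + 1) = i'; omega
  refine BB3.braid_fails_TFF lt hj2 π ?_ ?_ ?_ (H π hlin (n - 3 - i') hj2)
  · rw [show π (BB.x0 hj2) = r from by rw [happ, hrev0]; exact hr,
        show π (BB.x1 hj2) = p from by rw [happ, hrev1]; exact hp]
    exact ⟨k3, k4⟩
  · rw [show π (BB.x1 hj2) = p from by rw [happ, hrev1]; exact hp,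
        show π (BB.x2 hj2) = q from by rw [happ, hrev2]; exact hq]
    exact fun hcon => hcon.1 k1
  · rw [show π (BB.x0 hj2) = r from by rw [happ, hrev0]; exact hr,
        show π (BB.x2 hj2) = q from by rw [happ, hrev2]; exact hq]
    exact fun hcon => hcon.1 k2

end FAIL

/-- the braid relations hold for the `τ_i` on `L(P)` iff `P` is a
direct sum of chains (i.e. every connected component is totally ordered). -/
theorem braid_iff_direct_sum_of_chains {n : ℕ} (P : PartialOrder (Fin n)) :
    (∀ π : Equiv.Perm (Fin n), IsLinExt P.lt π → ∀ i : ℕ, i + 2 < n →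
        tauOp P.lt i (tauOp P.lt (i + 1) (tauOp P.lt i π)) =
          tauOp P.lt (i + 1) (tauOp P.lt i (tauOp P.lt (i + 1) π)))
    ↔ (∀ x y : Fin n, InSameComp P.lt x y → (P.le x y ∨ P.le y x)) := by
  classical
  set lt := P.lt with hltdef
  set le := P.le with hledef
  have hiff : ∀ a b, lt a b ↔ le a b ∧ ¬ le b a := P.lt_iff_le_not_ge
  have hirr : ∀ a, ¬ lt a a := fun a h => ((hiff a a).1 h).2 ((hiff a a).1 h).1
  have hle_of_lt : ∀ {a b}, lt a b → le a b := fun {a b} h => ((hiff a b).1 h).1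
  have htr : ∀ {a b c : Fin n}, lt a b → lt b c → lt a c := by
    intro a b c hab hbc
    obtain ⟨h1, h2⟩ := (hiff a b).1 hab
    obtain ⟨h3, h4⟩ := (hiff b c).1 hbc
    refine (hiff a c).2 ⟨P.le_trans _ _ _ h1 h3, fun h => h4 (P.le_trans _ _ _ h h1)⟩
  have hlt_of_le_ne : ∀ {a b}, le a b → a ≠ b → lt a b := by
    intro a b h hne
    exact (hiff a b).2 ⟨h, fun h' => hne (P.le_antisymm _ _ h h')⟩
  have hne_of_lt : ∀ {a b}, lt a b → a ≠ b := fun {a b} h e => hirr a (e ▸ h)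
  constructor
  · -- braid → chains
    intro H x y hxy
    by_contra hcomp
    push_neg at hcomp
    -- find a comparability-transitivity failure
    have hbad : ∃ a b c : Fin n, (le a b ∨ le b a) ∧ (le b c ∨ le c b) ∧
        ¬ (le a c ∨ le c a) := by
      by_contra hno
      push_neg at hno
      have : le x y ∨ le y x := by
        clear hcomp
        induction hxy with
        | refl => exact Or.inl (P.le_refl x)
        | tail hstep hlast ih =>
          exact hno _ _ _ ih (hlast.imp hle_of_lt hle_of_lt)
      exact absurd this (fun h => h.elim hcomp.1 hcomp.2)
    obtain ⟨a, b, c, hab, hbc, hnac⟩ := hbad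
    push_neg at hnac
    obtain ⟨hnac1, hnac2⟩ := hnac
    have hanec : a ≠ c := fun e => hnac1 (e ▸ P.le_refl a)
    have hnltac : ¬ lt a c := fun h' => hnac1 (hle_of_lt h')
    have hnltca : ¬ lt c a := fun h' => hnac2 (hle_of_lt h')
    have haneb : a ≠ b := by rintro rfl; exact hbc.elim hnac1 hnac2
    have hbnec : b ≠ c := by
      intro e; subst e; exact hab.elim hnac1 hnac2
    have hab' : lt a b ∨ lt b a :=
      hab.imp (fun h' => hlt_of_le_ne h' haneb) (fun h' => hlt_of_le_ne h' haneb.symm)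
    have hbc' : lt b c ∨ lt c b :=
      hbc.imp (fun h' => hlt_of_le_ne h' hbnec) (fun h' => hlt_of_le_ne h' hbnec.symm)
    rcases hab' with h1 | h1 <;> rcases hbc' with h2 | h2
    · exact hnltac (htr h1 h2)
    · -- Λ case : lt a b, lt c b ; use dual order
      exact (FAIL.braid_fail_L lt htr hirr H ⟨a, b, c, h1, h2, hnltac, hnltca, hanec⟩).elim
    · -- V case : lt b a, lt b c
      exact (FAIL.braid_fail_V lt htr hirr H ⟨a, b, c, h1, h2, hnltac, hnltca, hanec⟩).elim
    · exact hnltca (htr h2 h1)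
  · -- chains → braid
    intro hc π hlin i h
    have hcomp_step : ∀ {a b : Fin n}, (le a b ∨ le b a) → InSameComp lt a b := by
      intro a b hab
      by_cases he : a = b
      · exact he ▸ Relation.ReflTransGen.refl
      · refine Relation.ReflTransGen.single ?_
        exact hab.imp (fun h' => hlt_of_le_ne h' he) (fun h' => hlt_of_le_ne h' (Ne.symm he))
    have hctr : ∀ {a b c : Fin n}, (le a b ∨ le b a) → (le b c ∨ le c b) →
        (le a c ∨ le c a) := by
      intro a b c h1 h2
      exact hc a c ((hcomp_step h1).trans (hcomp_step h2))
    have hne01' : π (BB.x0 h) ≠ π (BB.x1 h) := fun e => BB2.ne01 h (π.injective e)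
    have hne12' : π (BB.x1 h) ≠ π (BB.x2 h) := fun e => BB2.ne12 h (π.injective e)
    have hcomp_of_not_incp : ∀ {a b : Fin n}, ¬ BB.incp lt a b → (le a b ∨ le b a) := by
      intro a b hn
      rw [BB.incp, not_and_or, not_not, not_not] at hn
      exact hn.imp hle_of_lt hle_of_lt
    have hnincp_of_comp : ∀ {a b : Fin n}, a ≠ b → (le a b ∨ le b a) → ¬ BB.incp lt a b := by
      intro a b hne hcomp hincp
      rcases hcomp with h' | h'
      · exact hincp.1 (hlt_of_le_ne h' hne)
      · exact hincp.2 (hlt_of_le_ne h' (Ne.symm hne))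
    apply BB3.braid_holds lt h π
    · rintro ⟨hA, hB, hC⟩
      refine hnincp_of_comp hne12' ?_ hB
      exact hctr (b := π (BB.x0 h)) (hcomp_of_not_incp hA).symm (hcomp_of_not_incp hC)
    · rintro ⟨hA, hB, hC⟩
      refine hnincp_of_comp hne01' ?_ hA
      exact hctr (b := π (BB.x2 h)) (hcomp_of_not_incp hC) (hcomp_of_not_incp hB).symm
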